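/- Let a ∈ ℝ, M ≥ 0, τᵢ ≥ 0, and let v : [τᵢ-1, ∞) → ℝ be a function with v(τᵢ) = 0, absolutely continuous on (τᵢ, τᵢ₊₁), satisfying v(t) = exp(-a(t-τᵢ))·v(τᵢ) + ∫_{τᵢ}^t exp(-a(t-s))·w(s) ds for t ∈ [τᵢ, τᵢ₊₁), where |w(s)| ≤ M·sup_{τᵢ-1 ≤ r ≤ s} |v(r)| for all s. Then |v(t)| ≤ M·p_a(t-τᵢ)·sup_{τᵢ-1 ≤ s ≤ t} |v(s)| for all t ∈ [τᵢ, τᵢ₊₁), where p_a(h) = ∫_0^h exp(-a(h-r)) dr. -/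

import Mathlib

open MeasureTheory Real Set

lemma biSup_eq_sSup_image_aux {A : Set ℝ} {f : ℝ → ℝ} (hf : ∀ x, 0 ≤ f x)
    (hA : A.Nonempty) : (⨆ r ∈ A, f r) = sSup (f '' A) := by
  by_cases hB : BddAbove (f '' A)
  · have hSnn : 0 ≤ sSup (f '' A) := Real.sSup_nonneg (by rintro y ⟨r, _, rfl⟩; exact hf r)
    refine le_antisymm ?_ ?_
    · refine Real.iSup_le (fun r => Real.iSup_le (fun hr => ?_) hSnn) hSnn
      exact le_csSup hB (mem_image_of_mem f hr)
    · refine csSup_le (hA.image f) ?_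
      rintro y ⟨r, hr, rfl⟩
      have hbdd : BddAbove (Set.range fun r => ⨆ _ : r ∈ A, f r) := by
        obtain ⟨b, hb⟩ := hB
        refine ⟨max b 0, ?_⟩
        rintro y ⟨r, rfl⟩
        show (⨆ _ : r ∈ A, f r) ≤ max b 0
        by_cases hrA : r ∈ A
        · rw [ciSup_pos hrA]
          exact le_trans (hb (mem_image_of_mem f hrA)) (le_max_left _ _)
        · haveI : IsEmpty (r ∈ A) := ⟨hrA⟩
          rw [iSup, Set.range_eq_empty, Real.sSup_empty]
          exact le_max_right _ _
      calc f r = ⨆ _ : r ∈ A, f r := (ciSup_pos (f := fun _ => f r) hr).symm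
        _ ≤ ⨆ r, ⨆ _ : r ∈ A, f r := le_ciSup hbdd r
  · rw [Real.sSup_of_not_bddAbove hB, Real.iSup_of_not_bddAbove]
    intro hr
    apply hB
    refine hr.mono ?_
    rintro y ⟨r, hrA, rfl⟩
    exact ⟨r, by show (⨆ _ : r ∈ A, f r) = f r; rw [ciSup_pos hrA]⟩

/-- Variation-of-constants estimate (3.16):
if `v(τᵢ)=0` and `v(t) = e^{-a(t-τᵢ)} v(τᵢ) + ∫_{τᵢ}^t e^{-a(t-s)} w(s) ds` with
`|w(s)| ≤ M sup_{τᵢ-1 ≤ r ≤ s} |v(r)|`, then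
`|v(t)| ≤ M p_a(t-τᵢ) sup_{τᵢ-1 ≤ s ≤ t} |v(s)|` on `[τᵢ, τᵢ₊₁)`. -/
theorem stmt_5 (a M τi τi1 : ℝ) (hM : 0 ≤ M) (hτi : 0 ≤ τi) (hlt : τi < τi1)
    (v w : ℝ → ℝ) (hv0 : v τi = 0)
    (hvc : ContinuousOn v (Set.Ioo τi τi1))
    (hvoc : ∀ t ∈ Set.Ico τi τi1,
      v t = Real.exp (-(a * (t - τi))) * v τi
            + ∫ s in τi..t, Real.exp (-(a * (t - s))) * w s)
    (hw : ∀ s, |w s| ≤ M * ⨆ r ∈ Set.Icc (τi - 1) s, |v r|) :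
    ∀ t ∈ Set.Ico τi τi1,
      |v t| ≤ M * (∫ r in (0:ℝ)..(t - τi), Real.exp (-(a * ((t - τi) - r))))
                * ⨆ s ∈ Set.Icc (τi - 1) t, |v s| := by
  intro t ht
  obtain ⟨ht1, ht2⟩ := ht
  set P : ℝ := ∫ r in (0:ℝ)..(t - τi), Real.exp (-(a * ((t - τi) - r))) with hPdef
  set S : ℝ := ⨆ s ∈ Set.Icc (τi - 1) t, |v s| with hSdef
  have hSnn : 0 ≤ S :=
    Real.iSup_nonneg fun s => Real.iSup_nonneg fun _ => abs_nonneg _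
  have hPnn : 0 ≤ P :=
    intervalIntegral.integral_nonneg (by linarith) (fun r _ => (Real.exp_pos _).le)
  have hRHS : 0 ≤ M * P * S := mul_nonneg (mul_nonneg hM hPnn) hSnn
  rcases eq_or_lt_of_le ht1 with heq | htlt
  · rw [← heq, hv0, abs_zero]; exact hRHS
  -- change of variables for P
  have hP : P = ∫ s in τi..t, Real.exp (-(a * (t - s))) := by
    have h1 : P = ∫ r in (0:ℝ)..(t - τi),
        (fun s => Real.exp (-(a * (t - s)))) (r + τi) := by
      apply intervalIntegral.integral_congr
      intro x _
      simp only
      congr 1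
      ring
    rw [h1, intervalIntegral.integral_comp_add_right (fun s => Real.exp (-(a * (t - s)))) τi]
    norm_num
  have hveq := hvoc t ⟨ht1, ht2⟩
  rw [hv0, mul_zero, zero_add] at hveq
  by_cases hint : IntervalIntegrable (fun s => Real.exp (-(a * (t - s))) * w s) volume τi t
  swap
  · rw [hveq, intervalIntegral.integral_undef hint, abs_zero]; exact hRHS
  by_cases hB : BddAbove ((fun x => |v x|) '' Set.Icc (τi - 1) t)
  · -- bounded case
    have hkey : ∀ s ∈ Set.Icc τi t, |w s| ≤ M * S := by
      intro s hs
      refine le_trans (hw s) (mul_le_mul_of_nonneg_left ?_ hM)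
      have hne1 : (Set.Icc (τi - 1) s).Nonempty := ⟨s, by constructor <;> [linarith [hs.1]; rfl]⟩
      have hne2 : (Set.Icc (τi - 1) t).Nonempty := ⟨t, by constructor <;> linarith⟩
      rw [biSup_eq_sSup_image_aux (fun x => abs_nonneg (v x)) hne1,
        hSdef, biSup_eq_sSup_image_aux (fun x => abs_nonneg (v x)) hne2]
      exact csSup_le_csSup hB (hne1.image _)
        (Set.image_mono (Set.Icc_subset_Icc_right hs.2))
    calc |v t| = |∫ s in τi..t, Real.exp (-(a * (t - s))) * w s| := by rw [hveq]
      _ ≤ ∫ s in τi..t, |Real.exp (-(a * (t - s))) * w s| :=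
          intervalIntegral.abs_integral_le_integral_abs htlt.le
      _ ≤ ∫ s in τi..t, Real.exp (-(a * (t - s))) * (M * S) := by
          apply intervalIntegral.integral_mono_on htlt.le hint.abs
          · exact (((Real.continuous_exp.comp (continuous_const.mul (continuous_const.sub continuous_id)).neg).mul
              continuous_const).intervalIntegrable τi t)
          · intro s hs
            rw [abs_mul, abs_of_pos (Real.exp_pos _)]
            exact mul_le_mul_of_nonneg_left (hkey s hs) (Real.exp_pos _).le
      _ = (∫ s in τi..t, Real.exp (-(a * (t - s)))) * (M * S) :=
          intervalIntegral.integral_mul_const _ _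
      _ = M * P * S := by rw [hP]; ring
  · -- unbounded case: w vanishes on (τi, t]
    have hwz : ∀ s ∈ Set.Ioc τi t, w s = 0 := by
      intro s hs
      have hcomp : BddAbove ((fun x => |v x|) '' Set.Icc s t) := by
        apply IsCompact.bddAbove_image isCompact_Icc
        apply (hvc.abs).mono
        intro x hx
        exact ⟨lt_of_lt_of_le hs.1 hx.1, lt_of_le_of_lt hx.2 ht2⟩
      have hnb : ¬ BddAbove ((fun x => |v x|) '' Set.Icc (τi - 1) s) := by
        intro hb
        apply hB
        have hsub : Set.Icc (τi - 1) t ⊆ Set.Icc (τi - 1) s ∪ Set.Icc s t := by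
          intro x hx
          rcases le_or_gt x s with h | h
          · exact Or.inl ⟨hx.1, h⟩
          · exact Or.inr ⟨h.le, hx.2⟩
        refine BddAbove.mono ?_ (hb.union hcomp)
        rw [← Set.image_union]
        exact Set.image_mono hsub
      have hne1 : (Set.Icc (τi - 1) s).Nonempty := ⟨s, by constructor <;> [linarith [hs.1.le]; rfl]⟩
      have hS0 : (⨆ r ∈ Set.Icc (τi - 1) s, |v r|) = 0 := by
        rw [biSup_eq_sSup_image_aux (fun x => abs_nonneg (v x)) hne1,
          Real.sSup_of_not_bddAbove hnb]
      have := hw s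
      rw [hS0, mul_zero] at this
      exact abs_nonpos_iff.mp this
    have hizero : (∫ s in τi..t, Real.exp (-(a * (t - s))) * w s) = 0 := by
      rw [intervalIntegral.integral_of_le htlt.le]
      rw [MeasureTheory.setIntegral_congr_fun measurableSet_Ioc
        (g := fun _ => (0:ℝ)) (fun s hs => by rw [hwz s hs, mul_zero])]
      simp
    rw [hveq, hizero, abs_zero]
    exact hRHS
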